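/- Let K ⊂ ℂⁿ be a convex body with 0 in its interior whose gauge g_K is differentiable in a neighborhood of ∂K, and let γ : [0,T] → ∂K be a closed characteristic, i.e. a C¹ curve with γ(0) = γ(T) and γ̇(t) = J∇g_K(γ(t)) for all t. Then ∫₀ᵀ ∇g_K(γ(t)) dt = 0, and consequently γ cannot be translated into the interior of K: for every v ∈ ℂⁿ there exists t ∈ [0,T] with γ(t) + v ∉ int K. -/

import Mathlib

noncomputable section

open Set intervalIntegral

/-- `ℂⁿ`, the complex Euclidean space. -/
abbrev Cn (n : ℕ) := EuclideanSpace ℂ (Fin n)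

/-- The standard symplectic form `ω(x,y) = Im⟨x,y⟩` (inner product conjugate-linear in the
first argument). -/
def symp {n : ℕ} (x y : Cn n) : ℝ := (inner ℂ x y : ℂ).im

/-- `J`, multiplication by the imaginary unit. -/
def Jmul {n : ℕ} (x : Cn n) : Cn n := Complex.I • x

/-- The polar body `K° = {y : ⟨x,y⟩_ℝ ≤ 1 for all x ∈ K}`. -/
def polarC {n : ℕ} (K : Set (Cn n)) : Set (Cn n) :=
  {y | ∀ x ∈ K, (inner ℂ x y : ℂ).re ≤ 1}

/-- `c_J(K)`, defined by `c_J(K)⁻¹ = sup {ω(x,y) : x, y ∈ K°}`. -/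
def cJ {n : ℕ} (K : Set (Cn n)) : ℝ :=
  (sSup {r : ℝ | ∃ x ∈ polarC K, ∃ y ∈ polarC K, r = symp x y})⁻¹

open Topology Filter MeasureTheory in
/-- Subgradient inequality for the gauge at a point of differentiability. -/
theorem subgrad_aux {n : ℕ} {K : Set (Cn n)} (hKconv : Convex ℝ K) (hnhds : K ∈ 𝓝 (0 : Cn n))
    {x g : Cn n} (hx : HasGradientAt (gauge K) g x) (v : Cn n) :
    (inner ℝ g v : ℝ) ≤ gauge K (x + v) - gauge K x := by
  have habs : Absorbent ℝ K := absorbent_nhds_zero hnhds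
  set φ : ℝ → ℝ := fun s => gauge K (x + s • v) with hφ
  have hD : HasDerivAt φ ((inner ℝ g v : ℝ)) 0 := by
    have h1 : HasDerivAt (fun s : ℝ => x + s • v) v 0 := by
      simpa using ((hasDerivAt_id (0 : ℝ)).smul_const v).const_add x
    have h2 : HasFDerivAt (gauge K) (InnerProductSpace.toDual ℝ (Cn n) g) (x + (0:ℝ) • v) := by
      simpa using hx.hasFDerivAt
    have h3 := h2.comp_hasDerivAt 0 h1
    simp only [InnerProductSpace.toDual_apply_apply] at h3
    exact h3
  have htend : Filter.Tendsto (slope φ 0) (nhdsWithin 0 (Ioi 0)) (nhds ((inner ℝ g v : ℝ))) :=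
    (hasDerivAt_iff_tendsto_slope.mp hD).mono_left
      (nhdsWithin_mono _ (fun s hs => ne_of_gt hs))
  refine le_of_tendsto htend ?_
  filter_upwards [Ioo_mem_nhdsGT_of_mem (by norm_num : (0:ℝ) ∈ Ico (0:ℝ) 1)] with s hs
  have hs0 : (0:ℝ) < s := hs.1
  have hconv : φ s ≤ (1 - s) * gauge K x + s * gauge K (x + v) := by
    have hxsv : x + s • v = (1 - s) • x + s • (x + v) := by
      rw [smul_add]; module
    calc φ s = gauge K ((1 - s) • x + s • (x + v)) := by rw [hφ]; simp only [hxsv]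
      _ ≤ gauge K ((1 - s) • x) + gauge K (s • (x + v)) := gauge_add_le hKconv habs _ _
      _ = (1 - s) * gauge K x + s * gauge K (x + v) := by
          rw [gauge_smul_of_nonneg (by linarith [hs.2] : (0:ℝ) ≤ 1 - s),
            gauge_smul_of_nonneg hs0.le]; simp [smul_eq_mul]
  have hφ0 : φ 0 = gauge K x := by simp [hφ]
  rw [slope_def_field]
  rw [hφ0, sub_zero, div_le_iff₀ hs0]
  nlinarith [hconv]

open Topology Filter MeasureTheory in
/-- for a convex body `K ⊂ ℂⁿ` with gauge differentiable near `∂K` and a closed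
characteristic `γ : [0,T] → ∂K`, the outer normals along `γ` integrate to zero, and consequently
`γ` cannot be translated into the interior of `K`. -/
theorem characteristic_normals_integrate_to_zero {n : ℕ} (K : Set (Cn n))
    (hKcomp : IsCompact K) (hKconv : Convex ℝ K) (hK0 : (0 : Cn n) ∈ interior K)
    (gradg : Cn n → Cn n) (U : Set (Cn n)) (hUopen : IsOpen U) (hUfr : frontier K ⊆ U)
    (hgrad : ∀ x ∈ U, HasGradientAt (gauge K) (gradg x) x)
    (T : ℝ) (hT : 0 < T) (γ : ℝ → Cn n)
    (hbd : ∀ t ∈ Icc (0 : ℝ) T, γ t ∈ frontier K)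
    (hclosed : γ 0 = γ T)
    (hchar : ∀ t ∈ Icc (0 : ℝ) T, HasDerivAt γ (Jmul (gradg (γ t))) t) :
    (∫ t in (0 : ℝ)..T, gradg (γ t)) = 0 ∧
      ∀ v : Cn n, ∃ t ∈ Icc (0 : ℝ) T, γ t + v ∉ interior K := by
  have hnhds : K ∈ 𝓝 (0 : Cn n) := mem_interior_iff_mem_nhds.mp hK0
  obtain ⟨C, hlip⟩ := hKconv.lipschitz_gauge hnhds
  have hbound : ∀ x ∈ U, ‖gradg x‖ ≤ C := by
    intro x hx
    have h1 : fderiv ℝ (gauge K) x = InnerProductSpace.toDual ℝ (Cn n) (gradg x) :=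
      (hgrad x hx).hasFDerivAt.fderiv
    have h2 := norm_fderiv_le_of_lipschitz ℝ hlip (x₀ := x)
    rw [h1] at h2
    simpa using h2
  set f : ℝ → Cn n := fun t => Jmul (gradg (γ t)) with hf
  have hderiv_eq : ∀ t ∈ Ioo (0:ℝ) T, deriv γ t = f t :=
    fun t ht => (hchar t (Ioo_subset_Icc_self ht)).deriv
  have hnormf : ∀ t ∈ Icc (0:ℝ) T, ‖f t‖ ≤ C := by
    intro t ht
    have : ‖f t‖ = ‖gradg (γ t)‖ := by
      simp [hf, Jmul, norm_smul]
    rw [this]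
    exact hbound _ (hUfr (hbd t ht))
  letI : MeasurableSpace (Cn n) := borel _
  haveI : BorelSpace (Cn n) := ⟨rfl⟩
  have hint : IntervalIntegrable f volume 0 T := by
    rw [intervalIntegrable_iff_integrableOn_Ioc_of_le hT.le]
    have hIoo : IntegrableOn (deriv γ) (Ioo 0 T) volume := by
      apply Measure.integrableOn_of_bounded (M := (C : ℝ))
      · exact (measure_Ioo_lt_top).ne
      · exact (measurable_deriv γ).aestronglyMeasurable
      · filter_upwards [ae_restrict_mem measurableSet_Ioo] with t ht
        rw [hderiv_eq t ht]
        exact hnormf t (Ioo_subset_Icc_self ht)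
    exact (hIoo.congr_fun hderiv_eq measurableSet_Ioo).congr_set_ae Ioo_ae_eq_Ioc.symm
  have hFTC : (∫ t in (0:ℝ)..T, f t) = γ T - γ 0 :=
    integral_eq_sub_of_hasDerivAt (fun t ht => hchar t (by rwa [uIcc_of_le hT.le] at ht)) hint
  have hf0 : (∫ t in (0:ℝ)..T, f t) = 0 := by rw [hFTC, hclosed, sub_self]
  have hmain : (∫ t in (0:ℝ)..T, gradg (γ t)) = 0 := by
    have h : (∫ t in (0:ℝ)..T, f t) = Complex.I • ∫ t in (0:ℝ)..T, gradg (γ t) := by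
      simp only [hf, Jmul]
      exact integral_smul Complex.I fun t => gradg (γ t)
    rw [hf0] at h
    exact (smul_eq_zero.mp h.symm).resolve_left Complex.I_ne_zero
  refine ⟨hmain, ?_⟩
  intro v
  by_contra hcon
  push_neg at hcon
  set φ : ℝ → ℝ := fun t => (inner ℝ (gradg (γ t)) v : ℝ) with hφ
  have hφneg : ∀ t ∈ Icc (0:ℝ) T, φ t < 0 := by
    intro t ht
    have hfr := hbd t ht
    have h1 : gauge K (γ t) = 1 := (gauge_eq_one_iff_mem_frontier hKconv hnhds).2 hfr
    have h2 : gauge K (γ t + v) < 1 := (gauge_lt_one_iff_mem_interior hKconv hnhds).2 (hcon t ht)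
    have h3 := subgrad_aux hKconv hnhds (hgrad _ (hUfr hfr)) v
    simp only [hφ]
    linarith
  have hintg : IntervalIntegrable (fun t => gradg (γ t)) volume 0 T := by
    have heq : (fun t => gradg (γ t)) = (-Complex.I) • f := by
      funext t
      simp [hf, Jmul, smul_smul, neg_mul, Complex.I_mul_I]
    rw [heq]
    exact hint.smul _
  have hφint : IntervalIntegrable φ volume 0 T := by
    have : φ = fun t => (innerSL ℝ v) (gradg (γ t)) := by
      funext t; simp [hφ, real_inner_comm]
    rw [this, intervalIntegrable_iff_integrableOn_Ioc_of_le hT.le]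
    exact (innerSL ℝ v).integrable_comp
      ((intervalIntegrable_iff_integrableOn_Ioc_of_le hT.le).mp hintg)
  have hφzero : (∫ t in (0:ℝ)..T, φ t) = 0 := by
    have h := (innerSL ℝ v).intervalIntegral_comp_comm hintg
    have heq : (∫ t in (0:ℝ)..T, φ t) = (innerSL ℝ v) (∫ t in (0:ℝ)..T, gradg (γ t)) := by
      rw [← h]
      congr 1
      funext t
      simp [hφ, real_inner_comm]
    rw [heq, hmain, map_zero]
  have hpos : (0:ℝ) < ∫ t in (0:ℝ)..T, -φ t := by
    apply intervalIntegral_pos_of_pos_on (f := fun t => -φ t) hφint.neg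
    · intro t ht
      have := hφneg t (Ioo_subset_Icc_self ht)
      simpa using by linarith
    · exact hT
  rw [intervalIntegral.integral_neg, hφzero, neg_zero] at hpos
  exact lt_irrefl 0 hpos
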